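/- Fix t ∈ (0,1) and let μ(x) = e^{−1}·(x+t)·(1 + t/x)^{x/t} for x ∈ (0, 1−t). Then μ(x) > 0 for all x ∈ (0, 1−t), and μ is strictly monotonically increasing on (0, 1−t). -/

import Mathlib

/-- The identric mean of `x` and `x + t`:
`μ(x) = e⁻¹ (x+t) (1 + t/x)^(x/t)`. -/
noncomputable def identric (t x : ℝ) : ℝ :=
  (Real.exp 1)⁻¹ * (x + t) * (1 + t / x) ^ (x / t)

/-- Parts (i) of lemma "lollipop": for fixed `t ∈ (0,1)`, the function
`μ(x) = e⁻¹ (x+t) (1 + t/x)^(x/t)` is positive and strictly monotonically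
increasing on `(0, 1 - t)`. -/
theorem identric_pos_and_strictMonoOn (t : ℝ) (ht : t ∈ Set.Ioo (0 : ℝ) 1) :
    (∀ x ∈ Set.Ioo (0 : ℝ) (1 - t), 0 < identric t x) ∧
    StrictMonoOn (identric t) (Set.Ioo (0 : ℝ) (1 - t)) := by
  obtain ⟨ht0, ht1⟩ := ht
  set f : ℝ → ℝ := fun x => -1 + ((x + t) * Real.log (x + t) - x * Real.log x) / t with hf
  have key : ∀ x ∈ Set.Ioo (0 : ℝ) (1 - t), identric t x = Real.exp (f x) := by
    intro x hx
    have hx0 : 0 < x := hx.1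
    have hxt : 0 < x + t := by linarith
    have h1 : (0 : ℝ) < 1 + t / x := by positivity
    have hμpos : 0 < identric t x := by
      unfold identric
      have := Real.rpow_pos_of_pos h1 (x / t)
      positivity
    have hlog : Real.log (1 + t / x) = Real.log (x + t) - Real.log x := by
      rw [show 1 + t / x = (x + t) / x by field_simp,
        Real.log_div (by linarith) hx0.ne']
    have hlogμ : Real.log (identric t x) = f x := by
      unfold identric
      rw [Real.log_mul (by positivity) (Real.rpow_pos_of_pos h1 _).ne',
        Real.log_mul (by positivity) hxt.ne', Real.log_inv, Real.log_exp,
        Real.log_rpow h1, hlog, hf]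
      field_simp
      ring
    rw [← hlogμ, Real.exp_log hμpos]
  have hderiv : ∀ x ∈ Set.Ioo (0 : ℝ) (1 - t),
      HasDerivAt f ((Real.log (x + t) - Real.log x) / t) x := by
    intro x hx
    have hx0 : 0 < x := hx.1
    have hxt : 0 < x + t := by linarith
    have h1 : HasDerivAt (fun y : ℝ => (y + t) * Real.log (y + t))
        (Real.log (x + t) + 1) x := by
      have h := (Real.hasDerivAt_mul_log hxt.ne').comp x
        ((hasDerivAt_id x).add_const t)
      simpa [Function.comp_def] using h
    have h2 : HasDerivAt (fun y : ℝ => y * Real.log y) (Real.log x + 1) x :=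
      Real.hasDerivAt_mul_log hx0.ne'
    have h3 := ((h1.sub h2).div_const t).const_add (-1)
    simpa [hf, add_sub_cancel_left] using h3
  have hdpos : ∀ x ∈ Set.Ioo (0 : ℝ) (1 - t),
      0 < (Real.log (x + t) - Real.log x) / t := by
    intro x hx
    have : Real.log x < Real.log (x + t) :=
      Real.log_lt_log hx.1 (by linarith)
    have h : 0 < Real.log (x + t) - Real.log x := by linarith
    positivity
  have hmono : StrictMonoOn f (Set.Ioo (0 : ℝ) (1 - t)) := by
    apply strictMonoOn_of_deriv_pos (convex_Ioo _ _)
    · intro x hx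
      exact (hderiv x hx).continuousAt.continuousWithinAt
    · intro x hx
      rw [interior_Ioo] at hx
      rw [(hderiv x hx).deriv]
      exact hdpos x hx
  constructor
  · intro x hx
    rw [key x hx]
    exact Real.exp_pos _
  · intro x hx y hy hxy
    rw [key x hx, key y hy]
    exact Real.exp_lt_exp.2 (hmono hx hy hxy)
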